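/- Let (X_n) be a sequence of sets, (X,d_X) and (Y,d_Y) metric spaces, and η_n : X_n → X maps such that for every x ∈ X there exist x_n ∈ X_n with η_n(x_n) → x. Let f_n : X_n → Y and f : X → Y be such that for every x ∈ X and every sequence x_n ∈ X_n with η_n(x_n) → x one has f_n(x_n) → f(x). Then f is continuous. -/

import Mathlib

open Filter Topology

theorem continuity_of_limit_along_discretizations
    {X Y : Type*} [MetricSpace X] [MetricSpace Y]
    (Xn : ℕ → Type*) (η : ∀ n, Xn n → X)
    (hdense : ∀ x : X, ∃ xs : ∀ n, Xn n, Tendsto (fun n => η n (xs n)) atTop (𝓝 x))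
    (fn : ∀ n, Xn n → Y) (f : X → Y)
    (hconv : ∀ (x : X) (xs : ∀ n, Xn n),
      Tendsto (fun n => η n (xs n)) atTop (𝓝 x) →
        Tendsto (fun n => fn n (xs n)) atTop (𝓝 (f x))) :
    Continuous f := by
  classical
  rw [continuous_iff_seqContinuous]
  intro u x hu
  rw [Metric.tendsto_atTop]
  by_contra hcon
  push_neg at hcon
  obtain ⟨ε, hε, hfar⟩ := hcon
  obtain ⟨φ, hφmono, hφ⟩ := Filter.extraction_of_frequently_atTop
    (Filter.frequently_atTop.2 hfar)
  set y : ℕ → X := fun k => u (φ k) with hy_def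
  have hy : Tendsto y atTop (𝓝 x) := hu.comp hφmono.tendsto_atTop
  have H : ∀ k : ℕ, ∃ (z : ∀ n, Xn n) (M : ℕ), ∀ n ≥ M,
      dist (η n (z n)) (y k) < 1/(k+1) ∧ dist (fn n (z n)) (f (y k)) < 1/(k+1) := by
    intro k
    obtain ⟨z, hz⟩ := hdense (y k)
    have hfz := hconv (y k) z hz
    rw [Metric.tendsto_atTop] at hz hfz
    obtain ⟨M1, h1⟩ := hz (1/(k+1)) (by positivity)
    obtain ⟨M2, h2⟩ := hfz (1/(k+1)) (by positivity)
    exact ⟨z, max M1 M2, fun n hn =>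
      ⟨h1 n (le_trans (le_max_left _ _) hn), h2 n (le_trans (le_max_right _ _) hn)⟩⟩
  choose zs M hM using H
  set N : ℕ → ℕ := fun k => k + (Finset.range (k+1)).sup M with hN_def
  have hNmono : Monotone N := fun a b hab => by
    exact add_le_add hab (Finset.sup_mono (Finset.range_subset_range.2 (by omega)))
  have hMN : ∀ k, M k ≤ N k := fun k =>
    le_add_of_nonneg_of_le (Nat.zero_le _)
      (Finset.le_sup (Finset.mem_range.2 (Nat.lt_succ_self k)))
  have hkN : ∀ k, k ≤ N k := fun k => Nat.le_add_right _ _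
  set κ : ℕ → ℕ := fun n => Nat.findGreatest (fun k => N k ≤ n) n with hκ_def
  have hκ_spec : ∀ n, N 0 ≤ n → N (κ n) ≤ n := by
    intro n hn
    exact Nat.findGreatest_spec (P := fun k => N k ≤ n) (Nat.zero_le n) hn
  have hκ_ge : ∀ K n, N K ≤ n → K ≤ κ n := by
    intro K n hn
    exact Nat.le_findGreatest (le_trans (hkN K) hn) hn
  have hκ_top : Tendsto κ atTop atTop := by
    rw [tendsto_atTop]
    intro K
    filter_upwards [eventually_ge_atTop (N K)] with n hn
    exact hκ_ge K n hn
  set z : ∀ n, Xn n := fun n => zs (κ n) n with hz_def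
  have hbound : ∀ n, N 0 ≤ n →
      dist (η n (z n)) (y (κ n)) < 1/(κ n + 1) ∧
      dist (fn n (z n)) (f (y (κ n))) < 1/(κ n + 1) := by
    intro n hn
    exact hM (κ n) n (le_trans (hMN (κ n)) (hκ_spec n hn))
  have hinv : Tendsto (fun n => 1/((κ n : ℝ)+1)) atTop (𝓝 0) :=
    (tendsto_one_div_add_atTop_nhds_zero_nat).comp hκ_top
  have hyd : Tendsto (fun n => dist (y (κ n)) x) atTop (𝓝 0) :=
    (tendsto_iff_dist_tendsto_zero.1 hy).comp hκ_top
  have hη : Tendsto (fun n => η n (z n)) atTop (𝓝 x) := by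
    rw [tendsto_iff_dist_tendsto_zero]
    have hsum : Tendsto (fun n => 1/((κ n : ℝ)+1) + dist (y (κ n)) x) atTop (𝓝 0) := by
      simpa using hinv.add hyd
    apply squeeze_zero' (Eventually.of_forall fun n => dist_nonneg) _ hsum
    filter_upwards [eventually_ge_atTop (N 0)] with n hn
    calc dist (η n (z n)) x ≤ dist (η n (z n)) (y (κ n)) + dist (y (κ n)) x :=
          dist_triangle _ _ _
      _ ≤ 1/((κ n : ℝ)+1) + dist (y (κ n)) x :=
          add_le_add_left (le_of_lt (hbound n hn).1) _
  have hfz := hconv x z hη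
  rw [Metric.tendsto_atTop] at hfz
  obtain ⟨N1, hN1⟩ := hfz (ε/2) (by positivity)
  obtain ⟨K, hK⟩ := exists_nat_gt (2/ε)
  have hKε : 1/((K : ℝ)+1) < ε/2 := by
    have hK' : (2:ℝ) < K * ε := by
      have := (div_lt_iff₀ hε).1 hK
      linarith
    rw [div_lt_div_iff₀ (by positivity) two_pos]
    nlinarith [hε.le]
  set n := max N1 (max (N 0) (N K)) with hn_def
  have hn1 : N1 ≤ n := le_max_left _ _
  have hn0 : N 0 ≤ n := le_trans (le_max_left _ _) (le_max_right _ _)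
  have hnK : N K ≤ n := le_trans (le_max_right _ _) (le_max_right _ _)
  have hκK : K ≤ κ n := hκ_ge K n hnK
  have hsmall : 1/((κ n : ℝ)+1) ≤ 1/((K : ℝ)+1) := by
    apply one_div_le_one_div_of_le (by positivity)
    have : (K : ℝ) ≤ κ n := Nat.cast_le.2 hκK
    linarith
  have h1 := (hbound n hn0).2
  have h2 : ε ≤ dist (f (y (κ n))) (f x) := hφ (κ n)
  have h3 : dist (f (y (κ n))) (f x) ≤ dist (fn n (z n)) (f (y (κ n))) + dist (fn n (z n)) (f x) := by
    rw [dist_comm (fn n (z n)) (f (y (κ n)))]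
    exact dist_triangle _ _ _
  have h4 := hN1 n hn1
  have : dist (fn n (z n)) (f x) ≥ ε/2 := by
    have : dist (fn n (z n)) (f (y (κ n))) < ε/2 := lt_of_lt_of_le h1 (le_of_lt (lt_of_le_of_lt hsmall hKε))
    linarith
  linarith
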